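/- The local trajectory is specified uniquely by the flat tetrahedron together with the gradient: if a,b ∈ ℤ⁴, i,j,k ∈ {1,2,3,4} are pairwise distinct, and π(T(a;i,j,k)) = π(T(b;i,j,k)), then π(T(a+eᵢ;j,k,i)) = π(T(b+eᵢ;j,k,i)) and π(T(a−e_k;k,i,j)) = π(T(b−e_k;k,i,j)); that is, the two slant tetrahedrons define the same local trajectory of flat tetrahedrons. -/

import Mathlib

noncomputable section

/-- Ambient space ℝ⁴. -/
abbrev E4 := EuclideanSpace ℝ (Fin 4)

/-- Standard basis vector eᵢ of ℝ⁴. -/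
def ee4 (i : Fin 4) : E4 := EuclideanSpace.single i 1

/-- 𝟙 = e₁ + e₂ + e₃ + e₄. -/
def ones4 : E4 := ∑ i, ee4 i

/-- Orthogonal projection π onto the hyperplane H = {v ∈ ℝ⁴ : v₁+v₂+v₃+v₄ = 0},
    given by π(v) = v − ((v₁+v₂+v₃+v₄)/4)·𝟙. -/
def proj4 (v : E4) : E4 := v - ((∑ i, v i) / 4) • ones4

/-- A lattice point of ℤ⁴ viewed in ℝ⁴. -/
def toE4 (a : Fin 4 → ℤ) : E4 := WithLp.toLp 2 (fun n => (a n : ℝ))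

/-- Slant tetrahedron T(a;i,j,k) = conv{a, a+eᵢ, a+eᵢ+eⱼ, a+eᵢ+eⱼ+e_k}. -/
def slant4 (a : Fin 4 → ℤ) (i j k : Fin 4) : Set E4 :=
  convexHull ℝ {toE4 a, toE4 a + ee4 i, toE4 a + ee4 i + ee4 j,
    toE4 a + ee4 i + ee4 j + ee4 k}

/-- Flat tetrahedron: the image π(T(a;i,j,k)). -/
def flat4 (a : Fin 4 → ℤ) (i j k : Fin 4) : Set E4 := proj4 '' slant4 a i j k

open scoped RealInnerProductSpace Pointwise

lemma proj4_linear : IsLinearMap ℝ proj4 := by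
  constructor
  · intro x y
    simp only [proj4]
    have h : (∑ n, (x + y) n) = (∑ n, x n) + ∑ n, y n := by
      simp [Finset.sum_add_distrib]
    rw [h, add_div, add_smul]
    abel
  · intro c x
    simp only [proj4]
    have h : (∑ n, (c • x) n) = c * ∑ n, x n := by
      simp [Finset.mul_sum]
    rw [h, smul_sub, mul_div_assoc, mul_smul]

lemma toE4_add_single (a : Fin 4 → ℤ) (i : Fin 4) :
    toE4 (a + Pi.single i 1) = toE4 a + ee4 i := by
  ext n
  simp [toE4, ee4, Pi.single_apply, EuclideanSpace.single_apply]

lemma toE4_sub_single (a : Fin 4 → ℤ) (i : Fin 4) :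
    toE4 (a - Pi.single i 1) = toE4 a - ee4 i := by
  ext n
  simp [toE4, ee4, Pi.single_apply, EuclideanSpace.single_apply]

/-- Base flat tetrahedron (at the origin). -/
def base4 (i j k : Fin 4) : Set E4 :=
  convexHull ℝ {0, proj4 (ee4 i), proj4 (ee4 i) + proj4 (ee4 j),
    proj4 (ee4 i) + proj4 (ee4 j) + proj4 (ee4 k)}

lemma base4_nonempty (i j k : Fin 4) : (base4 i j k).Nonempty :=
  ⟨0, subset_convexHull ℝ _ (by simp)⟩

lemma base4_bounded (i j k : Fin 4) : Bornology.IsBounded (base4 i j k) := by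
  have : ({0, proj4 (ee4 i), proj4 (ee4 i) + proj4 (ee4 j),
      proj4 (ee4 i) + proj4 (ee4 j) + proj4 (ee4 k)} : Set E4).Finite := by
    apply Set.Finite.insert; apply Set.Finite.insert; apply Set.Finite.insert
    exact Set.finite_singleton _
  exact (this.isCompact_convexHull (𝕜 := ℝ)).isBounded

lemma flat4_eq (a : Fin 4 → ℤ) (i j k : Fin 4) :
    flat4 a i j k = proj4 (toE4 a) +ᵥ base4 i j k := by
  rw [flat4, slant4, proj4_linear.image_convexHull, base4, ← convexHull_vadd]
  congr 1
  rw [Set.image_insert_eq, Set.image_insert_eq, Set.image_insert_eq,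
    Set.image_singleton, proj4_linear.map_add, proj4_linear.map_add,
    proj4_linear.map_add, proj4_linear.map_add, proj4_linear.map_add,
    proj4_linear.map_add]
  have hv : ∀ s : Set E4, proj4 (toE4 a) +ᵥ s = (proj4 (toE4 a) + ·) '' s := by
    intro s; rfl
  rw [hv, Set.image_insert_eq, Set.image_insert_eq, Set.image_insert_eq,
    Set.image_singleton]
  simp [add_assoc]

lemma proj4_sub (x y : E4) : proj4 (x - y) = proj4 x - proj4 y := by
  rw [sub_eq_add_neg, proj4_linear.map_add, proj4_linear.map_neg, ← sub_eq_add_neg]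

lemma vadd_cancel_bounded {T : Set E4} (hne : T.Nonempty) (hb : Bornology.IsBounded T)
    {v : E4} (h : v +ᵥ T = T) : v = 0 := by
  set f : E4 → ℝ := fun x => (inner ℝ v x : ℝ) with hf
  have hne' : (f '' T).Nonempty := hne.image f
  have hbdd : BddAbove (f '' T) := by
    obtain ⟨C, hC⟩ := hb.exists_norm_le
    refine ⟨‖v‖ * C, ?_⟩
    rintro r ⟨x, hx, rfl⟩
    calc f x ≤ ‖v‖ * ‖x‖ := real_inner_le_norm v x
      _ ≤ ‖v‖ * C := by
        have := hC x hx
        nlinarith [norm_nonneg v]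
  set d : ℝ := (inner ℝ v v : ℝ) with hd
  have key : (fun r => d + r) '' (f '' T) = f '' T := by
    conv_rhs => rw [← h]
    have : (v +ᵥ T) = (v + ·) '' T := rfl
    rw [this, Set.image_image, Set.image_image]
    apply Set.image_congr'
    intro x
    simp [hf, hd, inner_add_right, mul_add, Finset.sum_add_distrib]
  have hlub := isLUB_csSup hne' hbdd
  have h2 : IsLUB ((fun r => d + r) '' (f '' T)) (d + sSup (f '' T)) := by
    have := (OrderIso.addLeft d).isLUB_image' (s := f '' T) (x := sSup (f '' T))
    simpa using this.mpr hlub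
  rw [key] at h2
  have hds : d + sSup (f '' T) = sSup (f '' T) := h2.unique hlub
  have : d = 0 := by linarith
  have := hd ▸ this
  exact inner_self_eq_zero.mp this

/-- the local trajectory is specified uniquely by the flat
tetrahedron together with the gradient. -/
theorem stmt15 (a b : Fin 4 → ℤ) (i j k : Fin 4)
    (hij : i ≠ j) (hik : i ≠ k) (hjk : j ≠ k)
    (h : flat4 a i j k = flat4 b i j k) :
    flat4 (a + Pi.single i 1) j k i = flat4 (b + Pi.single i 1) j k i ∧
    flat4 (a - Pi.single k 1) k i j = flat4 (b - Pi.single k 1) k i j := by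
  rw [flat4_eq, flat4_eq] at h
  have h' : (proj4 (toE4 a) - proj4 (toE4 b)) +ᵥ base4 i j k = base4 i j k := by
    have h2 : (-proj4 (toE4 b)) +ᵥ (proj4 (toE4 a) +ᵥ base4 i j k)
        = (-proj4 (toE4 b)) +ᵥ (proj4 (toE4 b) +ᵥ base4 i j k) := by rw [h]
    rwa [vadd_vadd, vadd_vadd, neg_add_cancel, neg_add_eq_sub, zero_vadd] at h2
  have hab : proj4 (toE4 a) = proj4 (toE4 b) := by
    have := vadd_cancel_bounded (base4_nonempty i j k) (base4_bounded i j k) h'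
    exact sub_eq_zero.mp this
  constructor
  · rw [flat4_eq, flat4_eq, toE4_add_single, toE4_add_single,
      proj4_linear.map_add, proj4_linear.map_add, hab]
  · rw [flat4_eq, flat4_eq, toE4_sub_single, toE4_sub_single,
      proj4_sub, proj4_sub, hab]
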